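/- Let $H$ be a finite group and $P$ a normal subgroup such that $H/P$ is solvable. If $F \leq H$ is minimal (with respect to inclusion) among subgroups satisfying $PF = H$, then $F$ is solvable. -/

import Mathlib

open scoped Pointwise

theorem stmt_17 {H : Type*} [Group H] [Finite H] (P : Subgroup H) [P.Normal]
    (hsolv : IsSolvable (H ⧸ P)) (F : Subgroup H)
    (hPF : (P : Set H) * (F : Set H) = Set.univ)
    (hmin : ∀ F' : Subgroup H, F' < F → (P : Set H) * (F' : Set H) ≠ Set.univ) :
    IsSolvable F := by
  set N : Subgroup F := P.subgroupOf F with hN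
  have hNnormal : N.Normal := Subgroup.Normal.subgroupOf ‹P.Normal› F
  -- N is contained in the Frattini subgroup of F
  have hNfr : N ≤ frattini F := by
    rw [frattini, Order.radical]
    refine le_iInf fun M => le_iInf fun hM => ?_
    by_contra hNM
    have hsup : N ⊔ M = ⊤ := hM.2 (N ⊔ M) (lt_of_le_of_ne le_sup_right (by
      intro h
      exact hNM (by rw [h]; exact le_sup_left)))
    -- consider the image of M in H
    set F' : Subgroup H := M.map F.subtype with hF'
    have hF'lt : F' < F := by
      refine lt_of_le_of_ne (Subgroup.map_subtype_le M) ?_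
      intro h
      have : M = ⊤ := by
        apply Subgroup.map_injective F.subtype_injective
        rw [← MonoidHom.range_eq_map, Subgroup.range_subtype]
        exact h
      exact hM.1 this
    apply hmin F' hF'lt
    apply Set.eq_univ_of_univ_subset
    rw [← hPF]
    rintro h ⟨p, hp, f, hf, rfl⟩
    have hftop : (⟨f, hf⟩ : F) ∈ (⊤ : Subgroup F) := Subgroup.mem_top _
    rw [← hsup, ← SetLike.mem_coe, Subgroup.normal_mul N M] at hftop
    obtain ⟨n, hn, m, hm, hnm⟩ := hftop
    have hfn : f = (n : H) * (m : H) := by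
      have := congrArg (Subgroup.subtype F) hnm
      simpa using this.symm
    refine ⟨p * (n : H), P.mul_mem hp hn, (m : H), ⟨m, hm, rfl⟩, ?_⟩
    show p * (n : H) * (m : H) = p * f
    rw [hfn, mul_assoc]
  -- conclude solvability
  haveI : Group.IsNilpotent (frattini F) := frattini_nilpotent
  haveI : Group.IsSolvable (frattini F) := inferInstance
  haveI : Group.IsSolvable (H ⧸ P) := hsolv
  refine solvable_of_ker_le_range (frattini F).subtype
    ((QuotientGroup.mk' P).comp F.subtype) ?_
  rw [Subgroup.range_subtype]
  intro x hx
  apply hNfr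
  simp only [MonoidHom.mem_ker, MonoidHom.comp_apply, QuotientGroup.mk'_apply,
    QuotientGroup.eq_one_iff] at hx
  exact hx
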